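/- Let p and q be coprime positive integers. Then the distance from (p,q) to the orthogonal projection of B(p,q) onto the line spanned by (p,q) equals the distance from the origin to the orthogonal projection of B(q,p) onto the line spanned by (q,p). -/

import Mathlib

/-- The point (x,y) in the Euclidean plane. -/
noncomputable def V (x y : ℝ) : EuclideanSpace ℝ (Fin 2) := WithLp.toLp 2 ![x, y]

open scoped InnerProductSpace
lemma inner_V (x y z w : ℝ) : ⟪V x y, V z w⟫_ℝ = x*z + y*w := by
  simp [V, EuclideanSpace.inner_eq_star_dotProduct]; ring
lemma norm_V (x y : ℝ) : ‖V x y‖ = Real.sqrt (x^2 + y^2) := by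
  simp [V, EuclideanSpace.norm_eq, Fin.sum_univ_two, sq]
lemma proj_dist1 (u w : EuclideanSpace ℝ (Fin 2)) (hu : u ≠ 0) :
    dist u ((Submodule.orthogonalProjectionOnto (ℝ ∙ u) w : EuclideanSpace ℝ (Fin 2)))
      = |‖u‖^2 - ⟪u, w⟫_ℝ| / ‖u‖ := by
  rw [← Submodule.starProjection_apply, Submodule.starProjection_singleton]
  simp only [RCLike.ofReal_real_eq_id, id_eq]
  have hn : ‖u‖ ≠ 0 := norm_ne_zero_iff.mpr hu
  rw [dist_eq_norm]
  have h2 : u - (⟪u, w⟫_ℝ / ‖u‖^2) • u = ((‖u‖^2 - ⟪u, w⟫_ℝ)/‖u‖^2) • u := by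
    nth_rw 1 [← one_smul ℝ u]
    rw [← sub_smul]; congr 1; field_simp
  rw [h2, norm_smul, Real.norm_eq_abs, abs_div, abs_of_nonneg (by positivity : (0:ℝ) ≤ ‖u‖^2)]
  field_simp
lemma proj_dist0 (u w : EuclideanSpace ℝ (Fin 2)) (hu : u ≠ 0) :
    dist (0 : EuclideanSpace ℝ (Fin 2)) ((Submodule.orthogonalProjectionOnto (ℝ ∙ u) w : EuclideanSpace ℝ (Fin 2)))
      = |⟪u, w⟫_ℝ| / ‖u‖ := by
  rw [← Submodule.starProjection_apply, Submodule.starProjection_singleton]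
  simp only [RCLike.ofReal_real_eq_id, id_eq]
  have hn : ‖u‖ ≠ 0 := norm_ne_zero_iff.mpr hu
  rw [dist_eq_norm, zero_sub, norm_neg, norm_smul, Real.norm_eq_abs, abs_div,
    abs_of_nonneg (by positivity : (0:ℝ) ≤ (‖u‖:ℝ)^2)]
  field_simp
/-- the distance from (p,q) to the projection of B(p,q) on the line
spanned by (p,q) equals the distance from the origin to the projection of B(q,p)
on the line spanned by (q,p). Here (a,b) = B(p,q), (c,d) = B(q,p). -/
theorem bezout_projection_dist (p q a b c d : ℤ) (hp : 0 < p) (hq : 0 < q)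
    (hpq : IsCoprime p q)
    (ha : 0 < a) (hap : a ≤ p) (hb : 0 ≤ b) (hbq : b < q)
    (hbez : a * q - b * p = 1)
    (hc : 0 < c) (hcq : c ≤ q) (hd : 0 ≤ d) (hdp : d < p)
    (hbez' : c * p - d * q = 1) :
    dist (V (p : ℝ) (q : ℝ))
        ((Submodule.orthogonalProjectionOnto (ℝ ∙ V (p : ℝ) (q : ℝ)) (V (a : ℝ) (b : ℝ)) :
          EuclideanSpace ℝ (Fin 2)))
      = dist (0 : EuclideanSpace ℝ (Fin 2))
        ((Submodule.orthogonalProjectionOnto (ℝ ∙ V (q : ℝ) (p : ℝ)) (V (c : ℝ) (d : ℝ)) :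
          EuclideanSpace ℝ (Fin 2))) := by
  -- uniqueness of Bézout coefficients: c = q - b, d = p - a
  have key : (c + b - q) * p = (d + a - p) * q := by linear_combination hbez' - hbez
  have hdvd : q ∣ (c + b - q) := by
    have h1 : q ∣ (c + b - q) * p := ⟨d + a - p, by linarith [key]⟩
    exact (IsCoprime.symm hpq).dvd_of_dvd_mul_right h1
  obtain ⟨k, hk⟩ := hdvd
  have hk1 : k < 1 := by nlinarith
  have hk2 : -1 < k := by nlinarith
  have hk0 : k = 0 := by omega
  subst hk0
  rw [mul_zero] at hk
  have hcb : c = q - b := by omega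
  have hda : d = p - a := by nlinarith [key]
  subst hcb hda
  -- geometry
  have hp' : (0:ℝ) < p := by exact_mod_cast hp
  have hq' : (0:ℝ) < q := by exact_mod_cast hq
  have hu1 : V (p:ℝ) (q:ℝ) ≠ 0 := by
    rw [← norm_ne_zero_iff, norm_V]; positivity
  have hu2 : V (q:ℝ) (p:ℝ) ≠ 0 := by
    rw [← norm_ne_zero_iff, norm_V]; positivity
  rw [proj_dist1 _ _ hu1, proj_dist0 _ _ hu2, inner_V, inner_V, norm_V, norm_V]
  rw [Real.sq_sqrt (by positivity)]
  push_cast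
  rw [show (q:ℝ)^2 + (p:ℝ)^2 = (p:ℝ)^2 + (q:ℝ)^2 by ring]
  congr 1
  ring
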